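/- The boundary complex of the (d+1)-simplex on vertex set [d+2] (i.e., the complex of all proper subsets of [d+2]) is a (d,d−1)-prepartition extender, with specified facet F = {2,3,…,d+2} and specified (d−1)-dimensional face σ = {3,4,…,d+2}. -/

import Mathlib

/-- A simplicial complex on vertex set `ℕ`: a finite collection of finite sets of
vertices (faces) closed under taking subsets. -/
def IsComplex (Δ : Finset (Finset ℕ)) : Prop :=
  ∀ σ ∈ Δ, ∀ τ ⊆ σ, τ ∈ Δ

/-- `F` is a facet (maximal face) of `Δ`. -/
def IsFacet (Δ : Finset (Finset ℕ)) (F : Finset ℕ) : Prop :=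
  F ∈ Δ ∧ ∀ G ∈ Δ, F ⊆ G → F = G

/-- `Δ` is a pure `d`-dimensional complex: it is nonempty and every facet has
cardinality `d + 1` (i.e. dimension `d`). -/
def PureDim (Δ : Finset (Finset ℕ)) (d : ℤ) : Prop :=
  Δ.Nonempty ∧ ∀ F : Finset ℕ, IsFacet Δ F → (F.card : ℤ) = d + 1

/-- `S` is a partitioning of the set of faces `P` (ordered by inclusion) into Boolean
intervals topped by maximal elements of `P`.  Each pair `p ∈ S` represents the interval
`[p.1, p.2]`; the intervals must be full Boolean intervals contained in `P`
(second condition), their tops must be maximal elements of `P` (first condition),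
and every element of `P` must lie in exactly one interval (third condition). -/
def IsPartitioning (S : Finset (Finset ℕ × Finset ℕ)) (P : Finset (Finset ℕ)) : Prop :=
  (∀ p ∈ S, p.1 ⊆ p.2 ∧ p.2 ∈ P ∧ ∀ c ∈ P, p.2 ⊆ c → p.2 = c) ∧
  (∀ p ∈ S, ∀ e : Finset ℕ, p.1 ⊆ e → e ⊆ p.2 → e ∈ P) ∧
  (∀ e ∈ P, ∃! p : Finset ℕ × Finset ℕ, p ∈ S ∧ p.1 ⊆ e ∧ e ⊆ p.2)

/-- A set of faces, ordered by inclusion, is partitionable if it admits a partitioning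
into Boolean intervals whose maximum elements are maximal elements. -/
def Partitionable (P : Finset (Finset ℕ)) : Prop :=
  ∃ S : Finset (Finset ℕ × Finset ℕ), IsPartitioning S P

/-- The relative complex `(Δ, ⟨F⟩)`: the faces of `Δ` not contained in `F`. -/
def relF (Δ : Finset (Finset ℕ)) (F : Finset ℕ) : Finset (Finset ℕ) :=
  Δ.filter (fun τ => ¬ τ ⊆ F)

/-- The boundary complex of the `(d+1)`-simplex on vertex set `[d+2]`:
all proper subsets of `[d+2]`. -/
def bdSimplex (d : ℕ) : Finset (Finset ℕ) :=
  (Finset.Icc 1 (d + 2)).powerset.filter (fun τ => τ ≠ Finset.Icc 1 (d + 2))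

-- auxiliary lemmas
open Finset

lemma mem_bd {d : ℕ} {τ : Finset ℕ} :
    τ ∈ bdSimplex d ↔ τ ⊆ Finset.Icc 1 (d+2) ∧ τ ≠ Finset.Icc 1 (d+2) := by
  simp [bdSimplex]

lemma memP {d : ℕ} {e : Finset ℕ} :
    e ∈ insert (Finset.Icc 3 (d+2)) (relF (bdSimplex d) (Finset.Icc 2 (d+2))) ↔
      e = Finset.Icc 3 (d+2) ∨ (e ⊆ Finset.Icc 1 (d+2) ∧ e ≠ Finset.Icc 1 (d+2) ∧ 1 ∈ e) := by
  rw [mem_insert, relF, mem_filter, mem_bd]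
  constructor
  · rintro (h | ⟨⟨h1, h2⟩, h3⟩)
    · exact Or.inl h
    · refine Or.inr ⟨h1, h2, ?_⟩
      obtain ⟨x, hx, hx2⟩ := not_subset.mp h3
      have h4 := h1 hx
      simp only [mem_Icc] at h4
      simp only [mem_Icc, not_and_or, not_le] at hx2
      have hx1 : x = 1 := by omega
      rwa [hx1] at hx
  · rintro (h | ⟨h1, h2, h3⟩)
    · exact Or.inl h
    · refine Or.inr ⟨⟨h1, h2⟩, fun hsub => ?_⟩
      have := hsub h3
      simp [mem_Icc] at this

lemma top_max {d : ℕ} {j : ℕ} (hj : 2 ≤ j) (hj2 : j ≤ d + 2) :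
    (Finset.Icc 1 (d+2)).erase j ∈
        insert (Finset.Icc 3 (d+2)) (relF (bdSimplex d) (Finset.Icc 2 (d+2))) ∧
      ∀ c ∈ insert (Finset.Icc 3 (d+2)) (relF (bdSimplex d) (Finset.Icc 2 (d+2))),
        (Finset.Icc 1 (d+2)).erase j ⊆ c → (Finset.Icc 1 (d+2)).erase j = c := by
  have hjI : j ∈ Finset.Icc 1 (d+2) := by simp [mem_Icc]; omega
  have h1I : (1:ℕ) ∈ Finset.Icc 1 (d+2) := by simp [mem_Icc]
  constructor
  · rw [memP]
    refine Or.inr ⟨erase_subset _ _, ?_, ?_⟩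
    · intro h
      have : j ∈ (Finset.Icc 1 (d+2)).erase j := by rw [h]; exact hjI
      exact (notMem_erase j _) this
    · exact mem_erase.mpr ⟨by omega, h1I⟩
  · intro c hc hsub
    rw [memP] at hc
    rcases hc with rfl | ⟨hc1, hc2, _⟩
    · exfalso
      have h1e : (1:ℕ) ∈ (Finset.Icc 1 (d+2)).erase j := mem_erase.mpr ⟨by omega, h1I⟩
      have := hsub h1e
      simp [mem_Icc] at this
    · have hjc : j ∉ c := by
        intro hjc
        apply hc2
        apply Finset.Subset.antisymm hc1
        intro x hx
        rcases eq_or_ne x j with rfl | hxj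
        · exact hjc
        · exact hsub (mem_erase.mpr ⟨hxj, hx⟩)
      exact Finset.Subset.antisymm hsub (fun x hx => mem_erase.mpr ⟨fun h => hjc (h ▸ hx), hc1 hx⟩)

lemma insert_one_eq {d : ℕ} :
    insert 1 (Finset.Icc 3 (d+2)) = (Finset.Icc 1 (d+2)).erase 2 := by
  ext x
  simp only [mem_insert, mem_erase, mem_Icc]
  omega


/-- The boundary of the `(d+1)`-simplex on `[d+2]` is a `(d,d-1)`-prepartition extender
with specified facet `F = {2,…,d+2}` and specified `(d-1)`-dimensional face
`σ = {3,…,d+2}`: it is a pure `d`-dimensional complex, `F` is a facet, `σ ⊆ F` has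
dimension `d-1`, and the poset `(Δ,⟨F⟩) ∪ {σ}` is partitionable. -/
theorem boundary_simplex_prepartition_extender (d : ℕ) :
    IsComplex (bdSimplex d) ∧ PureDim (bdSimplex d) (d : ℤ) ∧
    IsFacet (bdSimplex d) (Finset.Icc 2 (d + 2)) ∧
    Finset.Icc 3 (d + 2) ⊆ Finset.Icc 2 (d + 2) ∧
    ((Finset.Icc 3 (d + 2)).card : ℤ) = ((d : ℤ) - 1) + 1 ∧
    Partitionable
      (insert (Finset.Icc 3 (d + 2)) (relF (bdSimplex d) (Finset.Icc 2 (d + 2)))) := by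
  have hI : (Finset.Icc 1 (d+2)).card = d + 2 := by rw [Nat.card_Icc]; omega
  have h1I : (1:ℕ) ∈ Finset.Icc 1 (d+2) := by simp [mem_Icc]
  refine ⟨?_, ?_, ?_, ?_, ?_, ?_⟩
  · -- IsComplex
    intro τ hτ τ' hτ'
    rw [mem_bd] at hτ ⊢
    refine ⟨hτ'.trans hτ.1, fun h => hτ.2 (Finset.Subset.antisymm hτ.1 ?_)⟩
    rw [← h]; exact hτ'
  · -- PureDim
    constructor
    · refine ⟨∅, mem_bd.mpr ⟨empty_subset _, ?_⟩⟩
      intro h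
      have : (1:ℕ) ∈ (∅ : Finset ℕ) := by rw [h]; exact h1I
      simp at this
    · rintro F' ⟨hF', hmax⟩
      rw [mem_bd] at hF'
      have hlt : F'.card < d + 2 := by
        rw [← hI]; exact card_lt_card (Finset.ssubset_iff_subset_ne.mpr hF')
      have hge : d + 1 ≤ F'.card := by
        by_contra h
        push_neg at h
        obtain ⟨x, hxI, hxF⟩ := exists_of_ssubset (Finset.ssubset_iff_subset_ne.mpr hF')
        have hmem : insert x F' ∈ bdSimplex d := by
          rw [mem_bd]
          refine ⟨insert_subset hxI hF'.1, fun heq => ?_⟩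
          have h2 : (insert x F').card = d + 2 := by rw [heq, hI]
          rw [card_insert_of_notMem hxF] at h2
          omega
        have := hmax _ hmem (subset_insert _ _)
        exact hxF (by rw [this]; exact mem_insert_self x F')
      omega
  · -- IsFacet
    constructor
    · rw [mem_bd]
      refine ⟨Finset.Icc_subset_Icc (by omega) le_rfl, fun h => ?_⟩
      have : (1:ℕ) ∈ Finset.Icc 2 (d+2) := by rw [h]; exact h1I
      simp [mem_Icc] at this
    · intro G hG hFG
      rw [mem_bd] at hG
      have h1 : G.card < d + 2 := by
        rw [← hI]; exact card_lt_card (Finset.ssubset_iff_subset_ne.mpr hG)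
      have h2 : (Finset.Icc 2 (d+2)).card = d + 1 := by rw [Nat.card_Icc]; omega
      refine eq_of_subset_of_card_le hFG ?_
      omega
  · exact Finset.Icc_subset_Icc (by omega) le_rfl
  · have : (Finset.Icc 3 (d+2)).card = d := by rw [Nat.card_Icc]; omega
    rw [this]; ring
  · -- Partitionable
    classical
    set σ0 : Finset ℕ := Finset.Icc 3 (d+2) with hσ0
    set I : Finset ℕ := Finset.Icc 1 (d+2) with hIdef
    refine ⟨insert (σ0, I.erase 2)
      ((Finset.Icc 3 (d+2)).image (fun j => (insert 1 (Finset.Icc 3 (j-1)), I.erase j))), ?_, ?_, ?_⟩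
    · -- tops
      intro p hp
      rw [mem_insert, mem_image] at hp
      rcases hp with rfl | ⟨j, hj, rfl⟩
      · refine ⟨?_, (top_max (by omega) (by omega)).1, (top_max (by omega) (by omega)).2⟩
        rw [← insert_one_eq]; exact subset_insert _ _
      · rw [mem_Icc] at hj
        refine ⟨?_, (top_max (by omega) (by omega)).1, (top_max (by omega) (by omega)).2⟩
        intro x hx
        rw [mem_insert] at hx
        rcases hx with rfl | hx
        · exact mem_erase.mpr ⟨by omega, h1I⟩
        · rw [mem_Icc] at hx
          exact mem_erase.mpr ⟨by omega, mem_Icc.mpr (by omega)⟩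
    · -- intervals in P
      intro p hp e he1 he2
      rw [mem_insert, mem_image] at hp
      rw [memP]
      rcases hp with rfl | ⟨j, hj, rfl⟩
      · simp only at he1 he2
        by_cases h1e : (1:ℕ) ∈ e
        · refine Or.inr ⟨he2.trans (erase_subset _ _), fun h => ?_, h1e⟩
          have h2e : (2:ℕ) ∈ e := by rw [h]; exact mem_Icc.mpr (by omega)
          exact notMem_erase 2 I (he2 h2e)
        · refine Or.inl (Finset.Subset.antisymm ?_ he1)
          intro x hx
          have := mem_erase.mp (he2 hx)
          rw [mem_Icc] at this
          rw [mem_Icc]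
          have hx1 : x ≠ 1 := fun h => h1e (h ▸ hx)
          omega
      · rw [mem_Icc] at hj
        simp only at he1 he2
        refine Or.inr ⟨he2.trans (erase_subset _ _), fun h => ?_, he1 (mem_insert_self _ _)⟩
        have hje : j ∈ e := by rw [h]; exact mem_Icc.mpr (by omega)
        exact notMem_erase j I (he2 hje)
    · -- unique interval
      intro e he
      rw [memP] at he
      by_cases hσe : σ0 ⊆ e
      · -- e = σ0 or e = erase 2; belongs to (σ0, erase 2)
        have he2 : e ⊆ I.erase 2 := by
          rcases he with rfl | ⟨hc1, hc2, h1e⟩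
          · rw [← insert_one_eq]; exact subset_insert _ _
          · have h2e : (2:ℕ) ∉ e := by
              intro h2e
              apply hc2
              refine Finset.Subset.antisymm hc1 ?_
              intro x hx
              rw [mem_Icc] at hx
              rcases Nat.lt_or_ge x 3 with hx3 | hx3
              · have : x = 1 ∨ x = 2 := by omega
                rcases this with rfl | rfl
                · exact h1e
                · exact h2e
              · exact hσe (mem_Icc.mpr ⟨hx3, hx.2⟩)
            exact fun x hx => mem_erase.mpr ⟨fun h => h2e (h ▸ hx), hc1 hx⟩
        refine ⟨(σ0, I.erase 2), ⟨mem_insert_self _ _, hσe, he2⟩, ?_⟩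
        rintro q ⟨hq, hq1, hq2⟩
        rw [mem_insert, mem_image] at hq
        rcases hq with rfl | ⟨j, hj, rfl⟩
        · rfl
        · exfalso
          rw [mem_Icc] at hj
          have hje : j ∈ e := hσe (mem_Icc.mpr hj)
          exact notMem_erase j I (hq2 hje)
      · -- e contains 1, pick minimal missing j
        have hee : e ⊆ I ∧ e ≠ I ∧ 1 ∈ e := by
          rcases he with rfl | h
          · exact absurd Finset.Subset.rfl hσe
          · exact h
        obtain ⟨hc1, hc2, h1e⟩ := hee
        have hne : (Finset.Icc 3 (d+2) \ e).Nonempty := by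
          obtain ⟨x, hx1, hx2⟩ := not_subset.mp hσe
          exact ⟨x, mem_sdiff.mpr ⟨hx1, hx2⟩⟩
        obtain ⟨j, hjmem, hjmin0⟩ := Finset.exists_min_image (Finset.Icc 3 (d+2) \ e) id hne
        rw [mem_sdiff] at hjmem
        obtain ⟨hjIcc, hje⟩ := hjmem
        rw [mem_Icc] at hjIcc
        have hjmin : ∀ k, 3 ≤ k → k ≤ d + 2 → k ∉ e → j ≤ k := by
          intro k h3 hd hk
          exact hjmin0 k (mem_sdiff.mpr ⟨mem_Icc.mpr ⟨h3, hd⟩, hk⟩)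
        have hbe : insert 1 (Finset.Icc 3 (j-1)) ⊆ e := by
          intro x hx
          rw [mem_insert] at hx
          rcases hx with rfl | hx
          · exact h1e
          · rw [mem_Icc] at hx
            by_contra hxe
            have := hjmin x hx.1 (by omega) hxe
            omega
        have hetop : e ⊆ I.erase j := fun x hx =>
          mem_erase.mpr ⟨fun h => hje (by rw [← h]; exact hx), hc1 hx⟩
        refine ⟨(insert 1 (Finset.Icc 3 (j-1)), I.erase j),
          ⟨mem_insert_of_mem (mem_image.mpr ⟨j, mem_Icc.mpr ⟨hjIcc.1, hjIcc.2⟩, rfl⟩),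
            hbe, hetop⟩, ?_⟩
        rintro q ⟨hq, hq1, hq2⟩
        rw [mem_insert, mem_image] at hq
        rcases hq with rfl | ⟨k, hk, rfl⟩
        · exact absurd hq1 hσe
        · rw [mem_Icc] at hk
          simp only at hq1 hq2
          have hke : k ∉ e := fun hke => notMem_erase k I (hq2 hke)
          have hjk : j ≤ k := hjmin k hk.1 hk.2 hke
          have hkj : k = j := by
            by_contra hne2
            have hjlt : j < k := by omega
            have : j ∈ e := hq1 (mem_insert_of_mem (mem_Icc.mpr ⟨hjIcc.1, by omega⟩))
            exact hje this
          rw [hkj]
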